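/- Set H_1 = (1,1), H_2 = (−1,−1), H_3 = (e^{iπ/4}, −e^{iπ/4}) in ℂ². Then for all (z,w) ∈ ℂ²: VDM(H_1,(z,w)) = w − 1 and VDM(H_1,H_2,(z,w)) = 2(w − z); consequently |VDM(H_1,H_2)| = sup_{(z,w)∈D̄²} |VDM(H_1,(z,w))| and |VDM(H_1,H_2,H_3)| = sup_{(z,w)∈D̄²} |VDM(H_1,H_2,(z,w))|, so (H_1,H_2,H_3) is a 3-Leja section for the closed unit bidisc D̄². -/

import Mathlib

open Finset

/-- Graded lexicographic strict order on `ℕ²`. -/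
def GradedLexLt2 (k l : ℕ × ℕ) : Prop :=
  k.1 + k.2 < l.1 + l.2 ∨
    (k.1 + k.2 = l.1 + l.2 ∧ (k.1 < l.1 ∨ (k.1 = l.1 ∧ k.2 < l.2)))

/-- Generalized bidimensional Vandermonde determinant `det [e_i(G_j)]`. -/
noncomputable def VDM2 (kEnum : ℕ → ℕ × ℕ) {N : ℕ} (G : Fin N → ℂ × ℂ) : ℂ :=
  Matrix.det (Matrix.of fun i j : Fin N =>
    (G j).1 ^ (kEnum (i : ℕ)).1 * (G j).2 ^ (kEnum (i : ℕ)).2)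

/-- The closed unit bidisc. -/
def Bidisc : Set (ℂ × ℂ) := {p | norm p.1 ≤ 1 ∧ norm p.2 ≤ 1}

/-- An `M`-Leja section (given by the first `M` terms of `G`) for a compact set
`K ⊂ ℂ²`; `G n` is the paper's `H_{n+1}`. -/
def IsLejaSection2 (kEnum : ℕ → ℕ × ℕ) (K : Set (ℂ × ℂ)) (M : ℕ) (G : ℕ → ℂ × ℂ) :
    Prop :=
  (∀ n < M, G n ∈ K) ∧ G 0 ∈ frontier K ∧
    ∀ n : ℕ, 1 ≤ n → n < M →
      IsGreatest
        ((fun z => norm (VDM2 kEnum (Fin.snoc (fun i : Fin n => G i) z))) '' K)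
        (norm (VDM2 kEnum (Fin.snoc (fun i : Fin n => G i) (G n))))

/-- with `H_1 = (1,1)`, `H_2 = (−1,−1)`, `H_3 = (e^{iπ/4}, −e^{iπ/4})`,
one has `VDM(H_1,(z,w)) = w − 1` and `VDM(H_1,H_2,(z,w)) = 2(w − z)`; consequently the
maxima over the bidisc are attained at `H_2` and `H_3` respectively, so
`(H_1,H_2,H_3)` is a 3-Leja section for the closed unit bidisc. -/
theorem statement8
    (kEnum : ℕ → ℕ × ℕ) (hbij : Function.Bijective kEnum)
    (hmono : ∀ a b : ℕ, a < b → GradedLexLt2 (kEnum a) (kEnum b))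
    (G : ℕ → ℂ × ℂ) (hG0 : G 0 = (1, 1)) (hG1 : G 1 = (-1, -1))
    (hG2 : G 2 = (Complex.exp ((Real.pi : ℂ) * Complex.I / 4),
                  -Complex.exp ((Real.pi : ℂ) * Complex.I / 4))) :
    (∀ z w : ℂ, VDM2 kEnum ![((1 : ℂ), (1 : ℂ)), (z, w)] = w - 1) ∧
    (∀ z w : ℂ,
      VDM2 kEnum ![((1 : ℂ), (1 : ℂ)), ((-1 : ℂ), (-1 : ℂ)), (z, w)] = 2 * (w - z)) ∧
    IsGreatest
      ((fun p : ℂ × ℂ => norm (VDM2 kEnum ![((1 : ℂ), (1 : ℂ)), p])) '' Bidisc)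
      (norm (VDM2 kEnum ![((1 : ℂ), (1 : ℂ)), ((-1 : ℂ), (-1 : ℂ))])) ∧
    IsGreatest
      ((fun p : ℂ × ℂ =>
          norm (VDM2 kEnum ![((1 : ℂ), (1 : ℂ)), ((-1 : ℂ), (-1 : ℂ)), p])) ''
        Bidisc)
      (norm (VDM2 kEnum
        ![((1 : ℂ), (1 : ℂ)), ((-1 : ℂ), (-1 : ℂ)),
          (Complex.exp ((Real.pi : ℂ) * Complex.I / 4),
           -Complex.exp ((Real.pi : ℂ) * Complex.I / 4))])) ∧
    IsLejaSection2 kEnum Bidisc 3 G := by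

  obtain ⟨hinj, hsurj⟩ := hbij
  -- determine the first three values of `kEnum`
  have h0 : kEnum 0 = (0, 0) := by
    obtain ⟨a, ha⟩ := hsurj (0, 0)
    rcases Nat.eq_zero_or_pos a with h | h
    · rw [← ha, h]
    · exfalso
      have hlt := hmono 0 a h
      rw [ha] at hlt
      rcases hq : kEnum 0 with ⟨q1, q2⟩
      rw [hq] at hlt
      rcases hlt with h | ⟨h, h'⟩ <;> simp at * <;> omega
  have h1 : kEnum 1 = (0, 1) := by
    obtain ⟨a, ha⟩ := hsurj (0, 1)
    have ha0 : a ≠ 0 := by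
      rintro rfl
      rw [h0] at ha
      exact absurd ha (by decide)
    rcases lt_or_ge a 2 with h | h
    · have : a = 1 := by omega
      rw [← ha, this]
    · exfalso
      have hlt := hmono 1 a (by omega)
      rw [ha] at hlt
      rcases hq : kEnum 1 with ⟨q1, q2⟩
      rw [hq] at hlt
      have hne : kEnum 1 ≠ (0, 0) := by
        rw [← h0]; intro hc; exact absurd (hinj hc) one_ne_zero
      rw [hq] at hne
      rcases hlt with h | ⟨h, h'⟩
      · simp only [] at h
        apply hne
        have : q1 = 0 ∧ q2 = 0 := by omega
        simp [this.1, this.2]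
      · rcases h' with h' | ⟨h1', h2'⟩ <;> omega
  have h2 : kEnum 2 = (1, 0) := by
    obtain ⟨a, ha⟩ := hsurj (1, 0)
    have ha0 : a ≠ 0 := by
      rintro rfl; rw [h0] at ha; exact absurd ha (by decide)
    have ha1 : a ≠ 1 := by
      rintro rfl; rw [h1] at ha; exact absurd ha (by decide)
    rcases lt_or_ge a 3 with h | h
    · have : a = 2 := by omega
      rw [← ha, this]
    · exfalso
      have hlt := hmono 2 a (by omega)
      rw [ha] at hlt
      rcases hq : kEnum 2 with ⟨q1, q2⟩
      rw [hq] at hlt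
      have hne0 : kEnum 2 ≠ (0, 0) := by
        rw [← h0]; intro hc; exact absurd (hinj hc) (by norm_num)
      have hne1 : kEnum 2 ≠ (0, 1) := by
        rw [← h1]; intro hc; exact absurd (hinj hc) (by norm_num)
      rw [hq] at hne0 hne1
      have e0 : ¬ (q1 = 0 ∧ q2 = 0) := fun ⟨u, v⟩ => hne0 (by simp [u, v])
      have e1 : ¬ (q1 = 0 ∧ q2 = 1) := fun ⟨u, v⟩ => hne1 (by simp [u, v])
      rcases hlt with h | ⟨h, h'⟩
      · omega
      · rcases h' with h' | ⟨h1', h2'⟩ <;> omega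
  -- the two VDM formulas
  have hV2 : ∀ z w : ℂ, VDM2 kEnum ![((1 : ℂ), (1 : ℂ)), (z, w)] = w - 1 := by
    intro z w
    simp [VDM2, Matrix.det_fin_two, h0, h1]
  have hV3 : ∀ z w : ℂ,
      VDM2 kEnum ![((1 : ℂ), (1 : ℂ)), ((-1 : ℂ), (-1 : ℂ)), (z, w)] = 2 * (w - z) := by
    intro z w
    simp [VDM2, Matrix.det_fin_three, h0, h1, h2]
    ring
  -- |e^{iπ/4}| = 1
  have habse : norm (Complex.exp ((Real.pi : ℂ) * Complex.I / 4)) = 1 := by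
    have : ((Real.pi : ℂ) * Complex.I / 4) = ((Real.pi / 4 : ℝ) : ℂ) * Complex.I := by
      push_cast; ring
    rw [this, Complex.norm_exp_ofReal_mul_I]
  -- the two IsGreatest statements
  have hIG1 : IsGreatest
      ((fun p : ℂ × ℂ => norm (VDM2 kEnum ![((1 : ℂ), (1 : ℂ)), p])) '' Bidisc)
      (norm (VDM2 kEnum ![((1 : ℂ), (1 : ℂ)), ((-1 : ℂ), (-1 : ℂ))])) := by
    constructor
    · exact ⟨((-1 : ℂ), (-1 : ℂ)), ⟨by simp, by simp⟩, rfl⟩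
    · rintro y ⟨⟨z, w⟩, ⟨hz, hw⟩, rfl⟩
      simp only [hV2]
      have hb : norm (w - 1) ≤ norm w + norm (1 : ℂ) := by
        exact norm_sub_le w 1
      have : norm ((-1 : ℂ) - 1) = 2 := by norm_num
      rw [this]
      simp only [norm_one] at hb
      linarith
  have hIG2 : IsGreatest
      ((fun p : ℂ × ℂ =>
          norm (VDM2 kEnum ![((1 : ℂ), (1 : ℂ)), ((-1 : ℂ), (-1 : ℂ)), p])) ''
        Bidisc)
      (norm (VDM2 kEnum
        ![((1 : ℂ), (1 : ℂ)), ((-1 : ℂ), (-1 : ℂ)),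
          (Complex.exp ((Real.pi : ℂ) * Complex.I / 4),
           -Complex.exp ((Real.pi : ℂ) * Complex.I / 4))])) := by
    constructor
    · exact ⟨_, ⟨by simp [habse], by simp [habse]⟩, rfl⟩
    · rintro y ⟨⟨z, w⟩, ⟨hz, hw⟩, rfl⟩
      simp only [hV3]
      have hval : norm (2 * (-Complex.exp ((Real.pi : ℂ) * Complex.I / 4) -
          Complex.exp ((Real.pi : ℂ) * Complex.I / 4))) = 4 := by
        have : 2 * (-Complex.exp ((Real.pi : ℂ) * Complex.I / 4) -
            Complex.exp ((Real.pi : ℂ) * Complex.I / 4)) =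
            (-4) * Complex.exp ((Real.pi : ℂ) * Complex.I / 4) := by ring
        rw [this]
        simp [habse]
      rw [hval]
      have hb : norm (w - z) ≤ norm w + norm z := by
        exact norm_sub_le w z
      have : norm (2 * (w - z)) = 2 * norm (w - z) := by
        simp
      rw [this]
      linarith
  refine ⟨hV2, hV3, hIG1, hIG2, ?_, ?_, ?_⟩
  · -- membership
    intro n hn
    interval_cases n
    · rw [hG0]; exact ⟨by simp, by simp⟩
    · rw [hG1]; exact ⟨by simp, by simp⟩
    · rw [hG2]; exact ⟨by simp [habse], by simp [habse]⟩
  · -- frontier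
    have hcl : IsClosed Bidisc := by
      have : Bidisc = {p : ℂ × ℂ | norm p.1 ≤ 1} ∩
          {p : ℂ × ℂ | norm p.2 ≤ 1} := rfl
      rw [this]
      exact (isClosed_le (continuous_norm.comp continuous_fst)
          continuous_const).inter
        (isClosed_le (continuous_norm.comp continuous_snd) continuous_const)
    have hmem : (((1 : ℂ), (1 : ℂ)) : ℂ × ℂ) ∈ Bidisc := ⟨by simp, by simp⟩
    have hni : (((1 : ℂ), (1 : ℂ)) : ℂ × ℂ) ∉ interior Bidisc := by
      intro h
      have hcont : Continuous fun t : ℝ => ((((1 : ℝ) + t : ℝ) : ℂ), (1 : ℂ)) := by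
        continuity
      have ht : Filter.Tendsto (fun t : ℝ => ((((1 : ℝ) + t : ℝ) : ℂ), (1 : ℂ)))
          (nhdsWithin 0 (Set.Ioi 0)) (nhds (((1 : ℂ), (1 : ℂ)))) := by
        have hh := (hcont.tendsto 0).mono_left
          (nhdsWithin_le_nhds (s := Set.Ioi (0 : ℝ)))
        simpa using hh
      have hev := ht.eventually_mem (isOpen_interior.mem_nhds h)
      obtain ⟨t, htmem, htpos⟩ := (hev.and self_mem_nhdsWithin).exists
      have hin : ((((1 : ℝ) + t : ℝ) : ℂ), (1 : ℂ)) ∈ Bidisc := interior_subset htmem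
      have htpos' : (0 : ℝ) < t := htpos
      have : norm (((1 : ℝ) + t : ℝ) : ℂ) ≤ 1 := hin.1
      rw [Complex.norm_real, Real.norm_eq_abs, abs_of_pos (by linarith)] at this
      linarith
    rw [hG0, hcl.frontier_eq]
    exact ⟨hmem, hni⟩
  · -- Leja maxima
    intro n hn1 hn3
    interval_cases n
    · have he : ∀ p : ℂ × ℂ,
          (Fin.snoc (fun i : Fin 1 => G i) p : Fin 2 → ℂ × ℂ) = ![((1 : ℂ), (1 : ℂ)), p] := by
        intro p
        funext i
        fin_cases i <;> simp [Fin.snoc, hG0]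
      simp only [he, hG1]
      exact hIG1
    · have he : ∀ p : ℂ × ℂ,
          (Fin.snoc (fun i : Fin 2 => G i) p : Fin 3 → ℂ × ℂ) =
            ![((1 : ℂ), (1 : ℂ)), ((-1 : ℂ), (-1 : ℂ)), p] := by
        intro p
        funext i
        fin_cases i <;> simp [Fin.snoc, hG0, hG1]
      simp only [he, hG2]
      exact hIG2
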